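/- Let k be a field of characteristic zero and K ⊆ L a field extension where K is equipped with an algebra structure over R = k⟦x_1,...,x_n⟧. Then the natural sequence 0 → Ω'_{K/k} ⊗_K L → Ω'_{L/k} → Ω_{L/K} → 0 of L-vector spaces is exact; equivalently, for every L-module M the restriction map Der'_k(L,M) → Der'_k(K,M) on special derivations is surjective. -/

import Mathlib

set_option maxHeartbeats 1000000
set_option synthInstance.maxHeartbeats 100000

open TrivSqZeroExt Polynomial IntermediateField

/-! Auxiliary instances making `TrivSqZeroExt L M` a commutative ring for a module `M`
over a field `L`. -/

section Inst
variable {L M : Type} [Field L] [AddCommGroup M] [Module L M]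

noncomputable instance opModL : Module Lᵐᵒᵖ M :=
  Module.compHom M ((RingHom.id L).fromOpposite mul_comm)

instance : IsCentralScalar L M := ⟨fun _ _ => rfl⟩

variable (F : Type) [Field F] [Algebra F L] [Algebra F (TrivSqZeroExt L M)]
  (hcomp : ∀ c : F, fst (algebraMap F (TrivSqZeroExt L M) c) = algebraMap F L c)
  (x : L) (m : M)

include hcomp in
theorem fst_aeval' (q : F[X]) :
    fst (aeval (inl x + inr m : TrivSqZeroExt L M) q) = aeval x q := by
  induction q using Polynomial.induction_on' with
  | add p q hp hq => simp [hp, hq]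
  | monomial n a =>
    simp only [aeval_monomial, fst_mul, fst_pow, hcomp, fst_add, fst_inl, fst_inr, add_zero]

include hcomp in
theorem snd_aeval' (q : F[X]) :
    snd (aeval (inl x + inr m : TrivSqZeroExt L M) q) =
      aeval x (derivative q) • m +
        q.sum fun i c => x ^ i • snd (algebraMap F (TrivSqZeroExt L M) c) := by
  have hf0 : ∀ i : ℕ, x ^ i • snd (algebraMap F (TrivSqZeroExt L M) (0 : F)) = 0 := by
    intro i; simp
  induction q using Polynomial.induction_on' with
  | add p q hp hq =>
    rw [map_add, snd_add, hp, hq, derivative_add, map_add, add_smul,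
      Polynomial.sum_add_index p q _ (fun i => hf0 i)
        (fun i b c => by rw [map_add, snd_add, smul_add])]
    abel
  | monomial n a =>
    rw [aeval_monomial, snd_mul, Polynomial.sum_monomial_index a _ (hf0 n)]
    rw [derivative_monomial, aeval_monomial]
    have h1 : fst (algebraMap F (TrivSqZeroExt L M) a) = algebraMap F L a := hcomp a
    have h2 : fst ((inl x + inr m : TrivSqZeroExt L M) ^ n) = x ^ n := by
      simp [fst_pow]
    have h3 : snd ((inl x + inr m : TrivSqZeroExt L M) ^ n) = n • x ^ (n - 1) • m := by
      rw [snd_pow]; simp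
    rw [h1, h3, op_smul_eq_smul, h2]
    rw [map_mul, map_natCast, ← Nat.cast_smul_eq_nsmul L n, smul_smul, smul_smul]
end Inst

/-! Partial lifts of the identity through a square-zero-type projection `φ : B → L`,
ordered by extension, together with the Zorn argument. -/

section Lifts

variable (K L B : Type) [Field K] [Field L] [Algebra K L] [CommRing B] [Algebra K B]
  (φ : B →ₐ[K] L)

structure PLift2 where
  carrier : IntermediateField K L
  emb : carrier →ₐ[K] B
  compat : ∀ a : carrier, φ (emb a) = (a : L)

variable {K L B φ}

namespace PLift2

instance : PartialOrder (PLift2 K L B φ) where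
  le L₁ L₂ := ∃ h : L₁.carrier ≤ L₂.carrier, ∀ x, L₂.emb (inclusion h x) = L₁.emb x
  le_refl L := ⟨le_rfl, by simp⟩
  le_trans L₁ L₂ L₃ := by
    rintro ⟨h₁₂, h₁₂'⟩ ⟨h₂₃, h₂₃'⟩
    refine ⟨h₁₂.trans h₂₃, fun _ ↦ ?_⟩
    rw [← inclusion_inclusion h₁₂ h₂₃, h₂₃', h₁₂']
  le_antisymm := by
    rintro ⟨L₁, e₁, c₁⟩ ⟨L₂, e₂, c₂⟩ ⟨h₁₂, h₁₂'⟩ ⟨h₂₁, h₂₁'⟩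
    obtain rfl : L₁ = L₂ := h₁₂.antisymm h₂₁
    congr
    exact AlgHom.ext h₂₁'

noncomputable def bot : PLift2 K L B φ :=
  ⟨⊥, (Algebra.ofId K B).comp (botEquiv K L), fun a => by
    obtain ⟨x, rfl⟩ := (botEquiv K L).symm.surjective a
    simp only [AlgHom.comp_apply, AlgHom.coe_coe, AlgEquiv.apply_symm_apply]
    rw [Algebra.ofId_apply, φ.commutes, botEquiv_symm]
    exact congrArg (algebraMap K L) (botEquiv_def (E := L) x)⟩

theorem bot_le' (Lf : PLift2 K L B φ) : bot ≤ Lf :=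
  ⟨OrderBot.bot_le _, fun x => by
    obtain ⟨x, rfl⟩ := (botEquiv K L).symm.surjective x
    simp only [bot, AlgHom.comp_apply, AlgHom.coe_coe, AlgEquiv.apply_symm_apply]
    show Lf.emb _ = Algebra.ofId K B (botEquiv K L ((botEquiv K L).symm x)); rw [AlgEquiv.apply_symm_apply]
    rw [Algebra.ofId_apply, botEquiv_symm]
    have : inclusion (OrderBot.bot_le Lf.carrier) (algebraMap K (⊥ : IntermediateField K L) x)
        = algebraMap K Lf.carrier x := Subtype.ext rfl
    exact (congrArg Lf.emb this).trans (Lf.emb.commutes x)⟩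

variable (c : Set (PLift2 K L B φ)) (hc : IsChain (· ≤ ·) c)

/-- The union of a chain of lifts. -/
noncomputable def union : PLift2 K L B φ :=
  let t (i : ↑(insert bot c)) := i.val.carrier
  have hc := hc.insert fun _ _ _ ↦ .inl (bot_le' _)
  have dir : Directed (· ≤ ·) t := hc.directedOn.directed_val.mono_comp _ fun _ _ h ↦ h.1
  { carrier := iSup t
    emb := (Subalgebra.iSupLift (toSubalgebra <| t ·) dir (·.val.emb) (fun i j h ↦
      AlgHom.ext fun x ↦ (hc.total i.2 j.2).elim (fun hij ↦ (hij.snd x).symm) fun hji ↦ by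
        erw [AlgHom.comp_apply, ← hji.snd (Subalgebra.inclusion h x),
          inclusion_inclusion, inclusion_self, AlgHom.id_apply x]) (iSup (toSubalgebra <| t ·)) le_rfl).comp
        (Subalgebra.equivOfEq _ _ <| toSubalgebra_iSup_of_directed dir)
    compat := by
      intro a
      have ha : (a : L) ∈ iSup t := a.2
      rw [← SetLike.mem_coe, coe_iSup_of_directed dir, Set.mem_iUnion] at ha
      obtain ⟨i, hi⟩ := ha
      have e1 : a = (inclusion (le_iSup t i) ⟨(a : L), hi⟩ : ↥(iSup t)) := Subtype.ext rfl
      rw [e1, AlgHom.comp_apply]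
      erw [Subalgebra.iSupLift_inclusion (K := (toSubalgebra <| t ·)) (i := i)
        ⟨(a : L), hi⟩ (le_iSup (fun i => toSubalgebra (t i)) i)]
      exact i.1.compat ⟨(a : L), hi⟩ }

theorem le_union ⦃σ : PLift2 K L B φ⦄ (hσ : σ ∈ c) : σ ≤ union c hc :=
  have hσ := Set.mem_insert_of_mem bot hσ
  let t (i : ↑(insert bot c)) := i.val.carrier
  ⟨le_iSup t ⟨σ, hσ⟩, fun x ↦ by
    dsimp only [union, AlgHom.comp_apply]
    erw [AlgHom.comp_apply]
    exact Subalgebra.iSupLift_inclusion (B := B) (K := (toSubalgebra <| t ·))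
      (i := ⟨σ, hσ⟩) x (le_iSup (toSubalgebra <| t ·) ⟨σ, hσ⟩)⟩

theorem exists_upper_bound (c : Set (PLift2 K L B φ)) (hc : IsChain (· ≤ ·) c) :
    ∃ ub, ∀ a ∈ c, a ≤ ub := ⟨_, le_union c hc⟩

end PLift2

end Lifts

section Steps

variable {K L M : Type} [Field K] [Field L] [Algebra K L] [CharZero L]
  [AddCommGroup M] [Module L M] [Algebra K (TrivSqZeroExt L M)]
  {φ : TrivSqZeroExt L M →ₐ[K] L}

theorem PLift2.exists_ge (hφ : ∀ b : TrivSqZeroExt L M, φ b = fst b)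
    (σ : PLift2 K L (TrivSqZeroExt L M) φ) (x : L) :
    ∃ τ, σ ≤ τ ∧ x ∈ τ.carrier := by
  classical
  set B := TrivSqZeroExt L M with hB
  set F := σ.carrier with hF
  letI : Algebra F B := σ.emb.toRingHom.toAlgebra
  have hcomp : ∀ c : F, fst (algebraMap F B c) = algebraMap F L c := fun c => by
    rw [← hφ]; exact σ.compat c
  haveI : CharZero F := ⟨fun a b h => by
    have h2 := congrArg (algebraMap F L) h
    rw [map_natCast, map_natCast] at h2
    exact Nat.cast_injective h2⟩
  obtain ⟨emb', hcompat'⟩ : ∃ emb' : F⟮x⟯ →ₐ[F] B, ∀ a : F⟮x⟯, fst (emb' a) = (a : L) := by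
    by_cases halg : IsAlgebraic F x
    · -- algebraic case
      have hx : IsIntegral F x := halg.isIntegral
      set f := minpoly F x with hf
      have hsep : f.Separable := (minpoly.irreducible hx).separable
      have hder : aeval x (derivative f) ≠ 0 :=
        hsep.aeval_derivative_ne_zero (minpoly.aeval F x)
      set e := aeval x (derivative f) with he
      set S := f.sum fun i c => x ^ i • snd (algebraMap F B c) with hS
      set m : M := -(e⁻¹ • S) with hm
      set y : B := inl x + inr m with hy
      have hroot : aeval y f = 0 := by
        refine TrivSqZeroExt.ext ?_ ?_
        · rw [fst_aeval' F hcomp x m f, minpoly.aeval, fst_zero]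
        · rw [snd_aeval' F hcomp x m f, snd_zero, ← he, ← hS, hm, smul_neg, smul_smul,
            mul_inv_cancel₀ hder, one_smul, neg_add_cancel]
      let pb := adjoin.powerBasis hx
      have hgen : aeval y (minpoly F pb.gen) = 0 := by
        rw [adjoin.powerBasis_gen, minpoly_gen]; exact hroot
      refine ⟨pb.lift y hgen, ?_⟩
      let fstA : B →ₐ[F] L :=
        { toFun := fst, map_one' := rfl, map_mul' := fst_mul,
          map_zero' := rfl, map_add' := fun _ _ => rfl, commutes' := hcomp }
      have key : fstA.comp (pb.lift y hgen) = F⟮x⟯.val := by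
        apply pb.algHom_ext
        rw [AlgHom.comp_apply, pb.lift_gen]
        show fst y = F⟮x⟯.val pb.gen
        rw [hy, fst_add, fst_inl, fst_inr, add_zero]
        show x = (pb.gen : L)
        rw [adjoin.powerBasis_gen, AdjoinSimple.coe_gen]
      intro a
      exact congrArg (fun g => g a) (congrArg (fun (h : _ →ₐ[F] L) => h.toFun) key)
    · -- transcendental case
      let g : F[X] →ₐ[F] B := Polynomial.aeval (inl x : B)
      have hg : ∀ q : F[X], fst (g q) = aeval x q := fun q => by
        have h0 := fst_aeval' F hcomp x 0 q
        rw [inr_zero, add_zero] at h0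
        exact h0
      have hunit : ∀ q : nonZeroDivisors F[X], IsUnit (g q) := fun q => by
        rw [isUnit_iff_isUnit_fst, hg]
        have hq : (q : F[X]) ≠ 0 := nonZeroDivisors.ne_zero q.2
        have hne : aeval x (q : F[X]) ≠ 0 := fun h => halg ⟨q, hq, h⟩
        exact hne.isUnit
      let η : RatFunc F →ₐ[F] B := IsLocalization.liftAlgHom (M := nonZeroDivisors F[X]) hunit
      have hηg : ∀ q : F[X], η (algebraMap F[X] (RatFunc F) q) = g q := fun q =>
        IsLocalization.lift_eq hunit q
      -- the identification of RatFunc F with F⟮x⟯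
      let g₀ : F[X] →ₐ[F] L := Polynomial.aeval x
      have hinj : Function.Injective g₀ := by
        rw [injective_iff_map_eq_zero]
        intro p hp
        by_contra h0
        exact halg ⟨p, h0, hp⟩
      let j : RatFunc F →ₐ[F] L := IsFractionRing.liftAlgHom hinj
      have hjg : ∀ q : F[X], j (algebraMap F[X] (RatFunc F) q) = aeval x q := fun q =>
        IsFractionRing.lift_algebraMap hinj q
      have hrange : j.fieldRange = F⟮x⟯ := by
        refine IsFractionRing.liftAlgHom_fieldRange_eq_of_range_eq hinj (s := {x}) ?_
        rw [Algebra.adjoin_singleton_eq_range_aeval]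
      let e : RatFunc F ≃ₐ[F] F⟮x⟯ :=
        (AlgEquiv.ofInjectiveField j).trans (equivOfEq hrange)
      have he : ∀ r, (e r : L) = j r := fun r => rfl
      refine ⟨η.comp e.symm.toAlgHom, fun a => ?_⟩
      have hfstη : ∀ r, fst (η r) = j r := by
        let fstR : B →+* L :=
          { toFun := fst, map_one' := rfl, map_mul' := fst_mul,
            map_zero' := rfl, map_add' := fun _ _ => rfl }
        have : fstR.comp (η : RatFunc F →+* B) = (j : RatFunc F →+* L) := by
          refine IsLocalization.ringHom_ext (nonZeroDivisors F[X]) (RingHom.ext fun q => ?_)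
          show fst (η (algebraMap F[X] (RatFunc F) q)) = j (algebraMap F[X] (RatFunc F) q)
          rw [hηg, hjg, hg]
        exact fun r => congrArg (fun (h : RatFunc F →+* L) => h r) this
      show fst (η (e.symm a)) = (a : L)
      rw [hfstη, ← he, AlgEquiv.apply_symm_apply]
  -- package the extension
  let carrier := F⟮x⟯.restrictScalars K
  letI : Algebra F carrier := F⟮x⟯.toSubalgebra.algebra
  let embτ : carrier →ₐ[K] B := (@algHomEquivSigma K F carrier B _ _ _ _ _ _ _ _
    (IsScalarTower.of_algebraMap_eq fun _ => rfl)).symm ⟨σ.emb, emb'⟩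
  refine ⟨⟨carrier, embτ, fun a => ?_⟩,
    ⟨fun z hz => IntermediateField.algebraMap_mem F⟮x⟯ ⟨z, hz⟩, emb'.commutes⟩,
    mem_adjoin_simple_self F x⟩
  rw [hφ]
  exact hcompat' ⟨a.1, a.2⟩

theorem PLift2.exists_total (hφ : ∀ b : TrivSqZeroExt L M, φ b = fst b) :
    ∃ Ψ : L →ₐ[K] TrivSqZeroExt L M, ∀ z : L, fst (Ψ z) = z := by
  obtain ⟨σ, hσmax⟩ := zorn_le (α := PLift2 K L (TrivSqZeroExt L M) φ)
    (fun c hc => ⟨_, fun a ha => PLift2.le_union c hc ha⟩)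
  have htop : σ.carrier = ⊤ := by
    by_contra h
    obtain ⟨x, hx⟩ : ∃ x : L, x ∉ σ.carrier := by
      by_contra h2; push_neg at h2
      exact h (eq_top_iff.mpr fun z _ => h2 z)
    obtain ⟨τ, hστ, hxτ⟩ := σ.exists_ge hφ x
    exact hx ((hσmax.eq_of_le hστ) ▸ hxτ)
  let eq : L ≃ₐ[K] σ.carrier := ((equivOfEq htop).trans topEquiv).symm
  refine ⟨σ.emb.comp eq.toAlgHom, fun z => ?_⟩
  rw [← hφ]
  exact σ.compat (eq z)

end Steps
/-- Formal partial derivative of a multivariate power series. -/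
noncomputable def pderivPS {k : Type} [Field k] {n : ℕ} (i : Fin n)
    (f : MvPowerSeries (Fin n) k) : MvPowerSeries (Fin n) k :=
  fun m => ((m i + 1 : ℕ) : k) * MvPowerSeries.coeff (R := k) (m + Finsupp.single i 1) f

/-- A `k`-derivation on an algebra `A` over `R = k⟦x₁,…,xₙ⟧` is *special* if on `R` it
satisfies `D f = ∑ᵢ (∂f/∂xᵢ) • D xᵢ`. -/
def IsSpecial {k : Type} [Field k] {n : ℕ} {A : Type} [CommRing A]
    [Algebra k A] [Algebra (MvPowerSeries (Fin n) k) A]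
    [IsScalarTower k (MvPowerSeries (Fin n) k) A]
    {M : Type} [AddCommGroup M] [Module k M] [Module A M] [IsScalarTower k A M]
    (D : Derivation k A M) : Prop :=
  ∀ f : MvPowerSeries (Fin n) k,
    D (algebraMap (MvPowerSeries (Fin n) k) A f) =
      ∑ i : Fin n, algebraMap (MvPowerSeries (Fin n) k) A (pderivPS i f) •
        D (algebraMap (MvPowerSeries (Fin n) k) A (MvPowerSeries.X i))


/-- for a field extension `K ⊆ L` where `K` is an `R = k⟦x⟧`-algebra,
every special `k`-derivation of `K` into an `L`-module extends to a special
`k`-derivation of `L`; this is the surjectivity of `Der'_k(L,M) → Der'_k(K,M)`,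
equivalent to exactness of `0 → Ω'_{K/k} ⊗_K L → Ω'_{L/k} → Ω_{L/K} → 0`. -/
theorem stmt_8 (k : Type) [Field k] [CharZero k] (n : ℕ) (K L : Type) [Field K] [Field L]
    [Algebra k K] [Algebra (MvPowerSeries (Fin n) k) K]
    [IsScalarTower k (MvPowerSeries (Fin n) k) K]
    [Algebra k L] [Algebra (MvPowerSeries (Fin n) k) L]
    [IsScalarTower k (MvPowerSeries (Fin n) k) L]
    [Algebra K L] [IsScalarTower k K L]
    [IsScalarTower (MvPowerSeries (Fin n) k) K L]
    (M : Type) [AddCommGroup M] [Module k M] [Module K M] [Module L M]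
    [IsScalarTower k K M] [IsScalarTower k L M] [IsScalarTower K L M]
    (D : Derivation k K M) (hD : IsSpecial (n := n) D) :
    ∃ D' : Derivation k L M, IsSpecial (n := n) D' ∧
      ∀ x : K, D' (algebraMap K L x) = D x := by
  haveI : CharZero L := charZero_of_injective_algebraMap (algebraMap k L).injective
  let φ₀ : K →+* TrivSqZeroExt L M :=
    { toFun := fun a => ((algebraMap K L a, D a) : TrivSqZeroExt L M)
      map_one' := by
        refine TrivSqZeroExt.ext ?_ ?_
        · show algebraMap K L 1 = 1; rw [map_one]
        · show D 1 = 0; exact D.map_one_eq_zero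
      map_mul' := fun a b => by
        refine TrivSqZeroExt.ext ?_ ?_
        · show algebraMap K L (a * b) = fst (_ * _)
          exact map_mul _ a b
        · show D (a * b) = snd (_ * _)
          erw [snd_mul, op_smul_eq_smul]
          show D (a * b) = algebraMap K L a • D b + algebraMap K L b • D a
          rw [algebraMap_smul, algebraMap_smul, D.leibniz]
      map_zero' := by
        refine TrivSqZeroExt.ext ?_ ?_
        · show algebraMap K L 0 = 0; rw [map_zero]
        · show D 0 = 0; exact D.map_zero
      map_add' := fun a b => by
        refine TrivSqZeroExt.ext ?_ ?_
        · show algebraMap K L (a + b) = fst (_ + _)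
          exact map_add _ a b
        · show D (a + b) = snd (_ + _)
          exact D.map_add a b }
  letI : Algebra K (TrivSqZeroExt L M) := φ₀.toAlgebra
  let φ : TrivSqZeroExt L M →ₐ[K] L :=
    { toFun := fst, map_one' := rfl, map_mul' := fst_mul, map_zero' := rfl,
      map_add' := fun _ _ => rfl, commutes' := fun _ => rfl }
  obtain ⟨Ψ, hΨ⟩ := PLift2.exists_total (φ := φ) (fun _ => rfl)
  have hext : ∀ a : K, snd (Ψ (algebraMap K L a)) = D a := fun a => by
    rw [Ψ.commutes]; rfl
  let lin : L →ₗ[k] M :=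
    { toFun := fun z => snd (Ψ z)
      map_add' := fun a b => by
        show snd (Ψ (a + b)) = snd (Ψ a) + snd (Ψ b)
        rw [map_add, snd_add]
      map_smul' := fun c z => by
        show snd (Ψ (c • z)) = c • snd (Ψ z)
        rw [Algebra.smul_def, map_mul, snd_mul]
        have h1 : Ψ (algebraMap k L c) = algebraMap K (TrivSqZeroExt L M) (algebraMap k K c) := by
          rw [IsScalarTower.algebraMap_apply k K L c, Ψ.commutes]
        rw [h1]
        have h2 : snd (algebraMap K (TrivSqZeroExt L M) (algebraMap k K c)) = 0 :=
          D.map_algebraMap c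
        have h3 : fst (algebraMap K (TrivSqZeroExt L M) (algebraMap k K c)) = algebraMap k L c :=
          (IsScalarTower.algebraMap_apply k K L c).symm
        rw [h2, h3, smul_zero, add_zero, algebraMap_smul] }
  let D' : Derivation k L M :=
    { toLinearMap := lin
      map_one_eq_zero' := by show snd (Ψ 1) = 0; rw [map_one]; rfl
      leibniz' := fun a b => by
        show snd (Ψ (a * b)) = a • snd (Ψ b) + b • snd (Ψ a)
        rw [map_mul, snd_mul, op_smul_eq_smul, hΨ a, hΨ b] }
  have hext' : ∀ a : K, D' (algebraMap K L a) = D a := hext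
  refine ⟨D', ?_, hext'⟩
  intro f
  rw [IsScalarTower.algebraMap_apply (MvPowerSeries (Fin n) k) K L f, hext', hD f]
  refine Finset.sum_congr rfl fun i _ => ?_
  rw [IsScalarTower.algebraMap_apply (MvPowerSeries (Fin n) k) K L (MvPowerSeries.X i), hext',
    IsScalarTower.algebraMap_apply (MvPowerSeries (Fin n) k) K L (pderivPS i f),
    algebraMap_smul (A := L) (r := algebraMap (MvPowerSeries (Fin n) k) K (pderivPS i f))]
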